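/- Let $\mathfrak{h}_0 \subset \mathfrak{gl}(V)$ be a Lie subalgebra over $\mathbb{C}$, $V$ finite-dimensional, and suppose $\mathfrak{h}_0$ contains no rank-one element $p \otimes q$ ($p \in V^*\setminus 0$, $q \in V \setminus 0$). Then for the classical (Spencer) prolongations $\mathfrak{h}_k = \{u \in S^{k+1}V^* \otimes V : u(v_1, \ldots, v_k, \cdot) \in \mathfrak{h}_0 \ \forall v_i \in V\}$, there exists $N$ with $\mathfrak{h}_N = 0$ (i.e. $\mathfrak{h}_0$ is of finite type). -/

import Mathlib

open Finset MvPolynomial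

noncomputable section



-- L1: equal fiber cardinalities gives a permutation
lemma aux_exists_perm {A C : Type*} [Fintype A] [DecidableEq C] (f g : A → C)
    (h : ∀ c, Fintype.card {x // f x = c} = Fintype.card {x // g x = c}) :
    ∃ σ : Equiv.Perm A, f = g ∘ σ := by
  refine ⟨Equiv.ofFiberEquiv (f := f) (g := g) fun c => Fintype.equivOfCardEq (h c), ?_⟩
  funext a
  exact (Equiv.ofFiberEquiv_map (fun c => Fintype.equivOfCardEq (h c)) a).symm

-- sigma fst fibers
def sigmaFstFiber {K : Type*} {β : K → Type*} (k : K) :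
    {s : Σ k', β k' // s.1 = k} ≃ β k where
  toFun s := s.2 ▸ s.1.2
  invFun x := ⟨⟨k, x⟩, rfl⟩
  left_inv := by rintro ⟨⟨k', x⟩, rfl⟩; rfl
  right_inv x := rfl

-- L2 : representative function with prescribed fiber counts
lemma aux_exists_rep {n N : ℕ} (α : Fin n →₀ ℕ) (h : ∑ i, α i = N) :
    ∃ f : Fin N → Fin n, ∀ k, Fintype.card {t // f t = k} = α k := by
  have hc : Fintype.card (Σ k : Fin n, Fin (α k)) = Fintype.card (Fin N) := by
    simp [Fintype.card_sigma, h]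
  let E : (Σ k : Fin n, Fin (α k)) ≃ Fin N := Fintype.equivOfCardEq hc
  refine ⟨fun t => (E.symm t).1, fun k => ?_⟩
  have e1 : {t // (E.symm t).1 = k} ≃ {s : Σ k', Fin (α k') // s.1 = k} :=
    E.symm.subtypeEquiv (q := fun s => s.1 = k) fun t => Iff.rfl
  calc Fintype.card {t // (E.symm t).1 = k}
      = Fintype.card {s : Σ k', Fin (α k') // s.1 = k} := Fintype.card_congr e1
    _ = α k := by rw [Fintype.card_congr (sigmaFstFiber k), Fintype.card_fin]

-- L3 : moving one hit to the last slot
lemma aux_exists_snoc {N n : ℕ} (f : Fin (N + 1) → Fin n) {t : Fin (N + 1)} {i : Fin n}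
    (ht : f t = i) :
    ∃ (g : Fin N → Fin n) (σ : Equiv.Perm (Fin (N + 1))), f ∘ σ = Fin.snoc g i := by
  set σ : Equiv.Perm (Fin (N + 1)) := Equiv.swap t (Fin.last N)
  refine ⟨fun k => f (σ k.castSucc), σ, ?_⟩
  funext x
  refine Fin.lastCases ?_ (fun k => ?_) x
  · simp [σ, Equiv.swap_apply_right, ht, Fin.snoc_last]
  · simp [Fin.snoc_castSucc]



-- functionals separate: if A outside a submodule, some functional kills h₀ but not A
lemma aux_sep {W : Type*} [AddCommGroup W] [Module ℂ W] (h₀ : Submodule ℂ W) {A : W}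
    (hA : A ∉ h₀) : ∃ lam : W →ₗ[ℂ] ℂ, (∀ B ∈ h₀, lam B = 0) ∧ lam A ≠ 0 := by
  have hπ : (h₀.mkQ A) ≠ 0 := by
    simpa [Submodule.Quotient.mk_eq_zero] using hA
  obtain ⟨φ, hφ⟩ : ∃ φ : Module.Dual ℂ (W ⧸ h₀), φ (h₀.mkQ A) ≠ 0 := by
    by_contra hcon
    push_neg at hcon
    exact hπ ((Module.forall_dual_apply_eq_zero_iff ℂ _).mp hcon)
  refine ⟨φ.comp h₀.mkQ, fun B hB => ?_, hφ⟩
  simp [Submodule.Quotient.mk_eq_zero, hB, (Submodule.Quotient.mk_eq_zero h₀).mpr hB]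

-- If only 0 is "orthogonal" to s (w.r.t. dot product) then s spans
lemma aux_span_top {n : ℕ} (s : Set (Fin n → ℂ))
    (h : ∀ q : Fin n → ℂ, (∀ v ∈ s, ∑ j, v j * q j = 0) → q = 0) :
    Submodule.span ℂ s = ⊤ := by
  by_contra hne
  obtain ⟨x, hx⟩ : ∃ x : Fin n → ℂ, x ∉ Submodule.span ℂ s := by
    by_contra hcon; push_neg at hcon
    exact hne (Submodule.eq_top_iff'.mpr hcon)
  obtain ⟨lam, hlam0, hlamx⟩ := aux_sep (Submodule.span ℂ s) hx
  set q : Fin n → ℂ := fun j => lam ((Pi.single j 1 : Fin n → ℂ)) with hq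
  have hqz : q = 0 := by
    refine h q fun v hv => ?_
    have hv' : lam v = 0 := hlam0 v (Submodule.subset_span hv)
    calc ∑ j, v j * q j = lam (∑ j, v j • (Pi.single j 1 : Fin n → ℂ)) := by
          simp [q, map_sum, map_smul, smul_eq_mul]
      _ = lam v := by
          congr 1
          rw [← Finset.univ_sum_single v]
          exact Finset.sum_congr rfl fun j _ => by
            ext k; by_cases hk : k = j <;> simp [Pi.single_apply, hk]
      _ = 0 := hv'
  -- but then lam = 0 on all of ℂⁿ, contradiction
  apply hlamx
  have : lam x = lam (∑ j, x j • (Pi.single j 1 : Fin n → ℂ)) := by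
    congr 1
    rw [← Finset.univ_sum_single x]
    exact (Finset.sum_congr rfl fun j _ => by
      ext k; by_cases hk : k = j <;> simp [Pi.single_apply, hk]).symm
  rw [this]
  simp [map_sum, map_smul, smul_eq_mul, show ∀ j, lam ((Pi.single j 1 : Fin n → ℂ)) = 0 from
    fun j => by have := congrFun hqz j; simpa [q] using this]




noncomputable section

lemma aux_comm_alg {n : ℕ} {ι : Type*} (c : ι → Fin n → Fin n → ℂ)
    (hspan : ∀ p : Fin n → ℂ, p ≠ 0 → ∀ q : Fin n → ℂ,
       (∀ l, ∑ j, (∑ i, p i * c l i j) * q j = 0) → q = 0) :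
    ∃ d : ℕ, 1 ≤ d ∧ ∀ i j : Fin n,
      (X i ^ d : MvPolynomial (Fin n) ℂ) • (Pi.single j 1 : Fin n → MvPolynomial (Fin n) ℂ) ∈
        Submodule.span (MvPolynomial (Fin n) ℂ)
          (Set.range fun l : ι => fun j : Fin n =>
            ∑ i, monomial (Finsupp.single i 1) (c l i j)) := by
  set S := MvPolynomial (Fin n) ℂ with hS
  set r : ι → (Fin n → S) := fun l j => ∑ i, monomial (Finsupp.single i 1) (c l i j) with hr
  set K := Submodule.span S (Set.range r) with hK
  set I : Ideal S :=
    { carrier := {s | ∀ j, s • (Pi.single j 1 : Fin n → S) ∈ K}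
      add_mem' := fun {a b} ha hb j => by rw [add_smul]; exact K.add_mem (ha j) (hb j)
      zero_mem' := fun j => by rw [zero_smul]; exact K.zero_mem
      smul_mem' := fun a s hs j => by
        rw [smul_eq_mul, mul_smul]; exact K.smul_mem a (hs j) } with hI
  -- Step A : zeroLocus I ⊆ {0}
  have stepA : ∀ p ∈ zeroLocus ℂ I, p = (0 : Fin n → ℂ) := by
    intro p hp
    by_contra hp0
    -- the evaluated rows span ℂⁿ
    set vset : Set (Fin n → ℂ) := Set.range (fun l : ι => fun j => ∑ i, p i * c l i j) with hvset
    have hsp : Submodule.span ℂ vset = ⊤ := by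
      apply aux_span_top
      intro q hq
      refine hspan p hp0 q fun l => ?_
      exact hq _ (Set.mem_range_self l)
    -- extract a basis from the spanning set
    obtain ⟨b, hbsub, hbspan, hbli⟩ := exists_linearIndependent ℂ vset
    rw [hsp] at hbspan
    have B : Module.Basis b ℂ (Fin n → ℂ) := Module.Basis.mk hbli (by rw [Subtype.range_coe, hbspan])
    have : Fintype b := FiniteDimensional.fintypeBasisIndex B
    have hcard : Fintype.card b = n := by
      have h1 := Module.finrank_eq_card_basis B
      rw [Module.finrank_fin_fun] at h1
      omega
    set eb : Fin n ≃ b := (Fintype.equivFinOfCardEq hcard).symm with heb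
    -- choose the relation indices
    have hex : ∀ k : Fin n, ∃ l : ι, (fun j => ∑ i, p i * c l i j) = (eb k : Fin n → ℂ) :=
      fun k => hbsub (eb k).2
    choose l hl using hex
    -- the polynomial matrix and its evaluation
    set R : Matrix (Fin n) (Fin n) S := Matrix.of (fun k j => r (l k) j) with hRdef
    have hev : ∀ k j, eval p (R k j) = (eb k : Fin n → ℂ) j := by
      intro k j
      rw [← congrFun (hl k) j]
      simp [hRdef, hr, eval_monomial, Finsupp.prod_single_index, mul_comm]
    -- the evaluated matrix is invertible
    have hunit : IsUnit (R.map (eval p)) := by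
      rw [← Matrix.linearIndependent_rows_iff_isUnit]
      have : (fun k => (R.map (eval p)) k) = fun k => (eb k : Fin n → ℂ) := by
        funext k; funext j; exact hev k j
      rw [show (R.map (eval p)).row = fun k => (eb k : Fin n → ℂ) from this]
      exact hbli.comp eb eb.injective
    have hdet0 : eval p R.det ≠ 0 := by
      rw [RingHom.map_det]
      exact (Matrix.isUnit_iff_isUnit_det _).mp hunit |>.ne_zero
    -- det R ∈ I by Cramer
    have hdetI : R.det ∈ I := by
      intro j
      have key : R.det • (Pi.single j 1 : Fin n → S) =
          ∑ k, (R.adjugate j k) • r (l k) := by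
        funext j'
        calc (R.det • (Pi.single j 1 : Fin n → S)) j'
            = R.det * (if j = j' then 1 else 0) := by
              by_cases h : j = j' <;> simp [Pi.single_apply, h, eq_comm]
          _ = (R.det • (1 : Matrix (Fin n) (Fin n) S)) j j' := by
              simp [Matrix.smul_apply, Matrix.one_apply]
          _ = ∑ k, R.adjugate j k * R k j' := by rw [← Matrix.adjugate_mul R]; simp [Matrix.mul_apply]
          _ = (∑ k, (R.adjugate j k) • r (l k)) j' := by
              simp [Finset.sum_apply, smul_eq_mul, hRdef]
      rw [key]
      exact K.sum_mem fun k _ => K.smul_mem _ (Submodule.subset_span (Set.mem_range_self _))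
    exact hdet0 (hp R.det hdetI)
  -- Step B : Nullstellensatz
  have hrad : ∀ i : Fin n, (X i : S) ∈ I.radical := by
    intro i
    rw [← vanishingIdeal_zeroLocus_eq_radical (K := ℂ)]
    intro p hp
    rw [stepA p hp]
    simp
  choose m hm using fun i => (Ideal.mem_radical_iff.mp (hrad i))
  refine ⟨(Finset.univ.sup m) + 1, le_add_self.trans (le_refl _), fun i j => ?_⟩
  have hle : m i ≤ Finset.univ.sup m + 1 :=
    le_trans (Finset.le_sup (Finset.mem_univ i)) (Nat.le_succ _)
  have : (X i : S) ^ (Finset.univ.sup m + 1) ∈ I := by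
    have : (X i : S) ^ (Finset.univ.sup m + 1) =
        X i ^ m i * X i ^ (Finset.univ.sup m + 1 - m i) := by
      rw [← pow_add, Nat.add_sub_cancel' hle]
    rw [this]
    exact I.mul_mem_right _ (hm i)
  exact this j








-- counts of a snoc
lemma aux_cnt_snoc {N n : ℕ} (g : Fin N → Fin n) (i k : Fin n) :
    Fintype.card {t // (Fin.snoc g i : Fin (N+1) → Fin n) t = k} =
      Fintype.card {t // g t = k} + (if i = k then 1 else 0) := by
  classical
  rw [Fintype.card_subtype, Fintype.card_subtype, Finset.card_filter, Finset.card_filter,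
    Fin.sum_univ_castSucc]
  simp [Fin.snoc_castSucc, Fin.snoc_last, eq_comm]

/-- Guillemin–Quillen–Singer criterion, stated direction: if a Lie
subalgebra `h₀ ⊆ gl(V)` over ℂ contains no nonzero rank-one element `p ⊗ q`, then
some Spencer prolongation `h_N ⊆ S^{N+1}V* ⊗ V` (symmetric multilinear maps whose
partial evaluations in the last slot lie in `h₀`) vanishes: `h₀` is of finite type. -/
theorem stmt16 {V : Type*} [AddCommGroup V] [Module ℂ V] [FiniteDimensional ℂ V]
    (h₀ : Submodule ℂ (V →ₗ[ℂ] V))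
    (hlie : ∀ A ∈ h₀, ∀ B ∈ h₀, A ∘ₗ B - B ∘ₗ A ∈ h₀)
    (hnorank1 : ¬ ∃ (p : V →ₗ[ℂ] ℂ) (q : V), p ≠ 0 ∧ q ≠ 0 ∧ p.smulRight q ∈ h₀) :
    ∃ N : ℕ, ∀ u : MultilinearMap ℂ (fun _ : Fin (N + 1) => V) V,
      (∀ (σ : Equiv.Perm (Fin (N + 1))) (m : Fin (N + 1) → V), u (m ∘ σ) = u m) →
      (∀ v : Fin N → V, ∃ A ∈ h₀, ∀ w : V, u (Fin.snoc v w) = A w) →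
      u = 0 := by
  classical
  set n := Module.finrank ℂ V with hn
  let b : Module.Basis (Fin n) ℂ V := Module.finBasis ℂ V
  -- the rank-one building blocks
  set E : Fin n → Fin n → (V →ₗ[ℂ] V) := fun i j => (b.coord i).smulRight (b j) with hE
  -- annihilator functionals
  let ι := {lam : (V →ₗ[ℂ] V) →ₗ[ℂ] ℂ // ∀ B ∈ h₀, lam B = 0}
  set c : ι → Fin n → Fin n → ℂ := fun lam i j => lam.1 (E i j) with hc
  -- expansion of endomorphisms in the E basis
  have hexpand : ∀ A : V →ₗ[ℂ] V, A = ∑ i, ∑ j, (b.repr (A (b i)) j) • E i j := by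
    intro A
    apply b.ext
    intro k
    simp only [LinearMap.coe_sum, Finset.sum_apply, LinearMap.smul_apply, hE,
      LinearMap.smulRight_apply, Module.Basis.coord_apply, Module.Basis.repr_self]
    rw [Finset.sum_comm]
    have : ∀ j : Fin n, ∑ i, (b.repr (A (b i))) j • ((Finsupp.single k 1 : Fin n →₀ ℂ) i) • b j
        = (b.repr (A (b k))) j • b j := by
      intro j
      rw [Finset.sum_eq_single k]
      · simp
      · intro i _ hik
        simp [Finsupp.single_apply, Ne.symm hik]
      · simp
    rw [Finset.sum_congr rfl fun j _ => this j]
    exact (b.sum_repr (A (b k))).symm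
  -- the span hypothesis from absence of rank-one elements
  have hspan : ∀ p : Fin n → ℂ, p ≠ 0 → ∀ q : Fin n → ℂ,
       (∀ l : ι, ∑ j, (∑ i, p i * c l i j) * q j = 0) → q = 0 := by
    intro p hp0 q hq
    by_contra hq0
    set p' : V →ₗ[ℂ] ℂ := ∑ i, p i • b.coord i with hp'
    set q' : V := ∑ j, q j • b j with hq'
    have hp'v : ∀ v, p' v = ∑ i, p i * b.coord i v := by
      intro v
      simp [hp', LinearMap.sum_apply, LinearMap.smul_apply, smul_eq_mul]
    have hp'app : ∀ k, p' (b k) = p k := by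
      intro k
      rw [hp'v]
      rw [Finset.sum_eq_single k]
      · simp
      · intro i _ hik
        simp [Module.Basis.coord_apply, Module.Basis.repr_self, Finsupp.single_apply, Ne.symm hik]
      · simp
    have hq'app : ∀ k, b.repr q' k = q k := by
      intro k
      rw [hq', map_sum, Finsupp.finset_sum_apply]
      rw [Finset.sum_eq_single k]
      · simp
      · intro j _ hjk
        simp [Module.Basis.repr_self, Finsupp.single_eq_of_ne (Ne.symm hjk)]
      · simp
    have hp'ne : p' ≠ 0 := by
      obtain ⟨i, hi⟩ := Function.ne_iff.mp hp0
      intro hcon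
      exact hi (by rw [← hp'app i, hcon]; simp)
    have hq'ne : q' ≠ 0 := by
      intro hcon
      apply hq0
      funext k
      rw [← hq'app k, hcon]
      simp
    have hmem : p'.smulRight q' ∈ h₀ := by
      by_contra hmem
      obtain ⟨lam, hlam0, hlamne⟩ := aux_sep h₀ hmem
      apply hlamne
      have hexp2 : p'.smulRight q' = ∑ j, ∑ i, (p i * q j) • E i j := by
        refine LinearMap.ext fun v => ?_
        have hrhs : (∑ j, ∑ i, (p i * q j) • E i j) v
            = ∑ j, ∑ i, ((p i * q j) * b.coord i v) • b j := by
          simp [LinearMap.sum_apply, LinearMap.smul_apply, hE, LinearMap.smulRight_apply,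
            smul_smul]
        rw [hrhs, LinearMap.smulRight_apply, hq', Finset.smul_sum]
        refine Finset.sum_congr rfl fun j _ => ?_
        rw [smul_smul, hp'v v, Finset.sum_mul, Finset.sum_smul]
        refine Finset.sum_congr rfl fun i _ => ?_
        congr 1
        ring
      rw [hexp2, map_sum]
      have := hq ⟨lam, hlam0⟩
      simp only [hc] at this
      rw [← this]
      refine Finset.sum_congr rfl fun j _ => ?_
      rw [map_sum, Finset.sum_mul]
      refine Finset.sum_congr rfl fun i _ => ?_
      rw [map_smul, smul_eq_mul]
      ring
    exact hnorank1 ⟨p', q', hp'ne, hq'ne, hmem⟩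
  obtain ⟨d, hd1, hXd⟩ := aux_comm_alg c hspan
  refine ⟨n * d, ?_⟩
  set N := n * d with hN
  intro u hsym hsub
  -- invariance of u under equal counts
  have W : ∀ f f' : Fin (N + 1) → Fin n,
      (∀ k, Fintype.card {t // f t = k} = Fintype.card {t // f' t = k}) →
      u (fun t => b (f t)) = u (fun t => b (f' t)) := by
    intro f f' h
    obtain ⟨σ, hσ⟩ := aux_exists_perm f f' h
    have : (fun t => b (f t)) = (fun t => b (f' t)) ∘ σ := by
      funext t; rw [hσ]; rfl
    rw [this, hsym]
  -- the coefficient functional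
  set w : Fin n → (Fin n →₀ ℕ) → ℂ := fun j α =>
    if h : (∑ i, α i) = N + 1 then
      b.repr (u (fun t => b ((Classical.choose (aux_exists_rep α h)) t))) j
    else 0 with hw
  set T : Finset (Fin n →₀ ℕ) :=
    Finset.Iic (Finsupp.equivFunOnFinite.symm (fun _ : Fin n => N + 1)) with hT
  set Φj : Fin n → MvPolynomial (Fin n) ℂ → ℂ := fun j s => ∑ α ∈ T, coeff α s * w j α with hΦj
  set Φ : (Fin n → MvPolynomial (Fin n) ℂ) → ℂ := fun G => ∑ j, Φj j (G j) with hΦ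
  -- degree N+1 multi-indices lie in T
  have hmemT : ∀ γ : Fin n →₀ ℕ, (∑ i, γ i) = N + 1 → γ ∈ T := by
    intro γ hγ
    rw [hT, Finset.mem_Iic]
    intro i
    show γ i ≤ N + 1
    calc γ i ≤ ∑ i', γ i' := Finset.single_le_sum (fun _ _ => Nat.zero_le _) (Finset.mem_univ i)
      _ = N + 1 := hγ
  -- Φj on monomials
  have hΦjmon : ∀ (j : Fin n) (γ : Fin n →₀ ℕ) (e : ℂ),
      Φj j (monomial γ e) = e * w j γ := by
    intro j γ e
    rw [hΦj]
    simp only [coeff_monomial, ite_mul, zero_mul]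
    rw [Finset.sum_ite_eq T γ (fun α => e * w j α)]
    by_cases hγT : γ ∈ T
    · rw [if_pos hγT]
    · rw [if_neg hγT]
      have hne : ¬ ((∑ i, γ i) = N + 1) := fun hcon => hγT (hmemT γ hcon)
      have : w j γ = 0 := dif_neg hne
      rw [this, mul_zero]
  have hΦjsum : ∀ (j : Fin n) {X : Type} (t : Finset X) (F : X → MvPolynomial (Fin n) ℂ),
      Φj j (∑ x ∈ t, F x) = ∑ x ∈ t, Φj j (F x) := by
    intro j X t F
    simp only [hΦj, coeff_sum, Finset.sum_mul]
    rw [Finset.sum_comm]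
  have hΦadd : ∀ G G' : Fin n → MvPolynomial (Fin n) ℂ, Φ (G + G') = Φ G + Φ G' := by
    intro G G'
    simp only [hΦ, hΦj, Pi.add_apply]
    rw [← Finset.sum_add_distrib]
    refine Finset.sum_congr rfl fun j _ => ?_
    rw [← Finset.sum_add_distrib]
    refine Finset.sum_congr rfl fun α _ => ?_
    rw [coeff_add, add_mul]
  have hΦj0 : ∀ j, Φj j 0 = 0 := by intro j; simp [hΦj]
  have hΦ0 : Φ 0 = 0 := by simp [hΦ, hΦj0]
  -- the key computation : Φ kills monomial multiples of the relations
  have hkey : ∀ (lam : ι) (β : Fin n →₀ ℕ) (e : ℂ),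
      Φ (monomial β e • fun j : Fin n => ∑ i, monomial (Finsupp.single i 1) (c lam i j)) = 0 := by
    intro lam β e
    have hΦval : Φ (monomial β e • fun j : Fin n => ∑ i, monomial (Finsupp.single i 1) (c lam i j))
        = ∑ j, ∑ i, (e * c lam i j) * w j (β + Finsupp.single i 1) := by
      rw [hΦ]
      refine Finset.sum_congr rfl fun j _ => ?_
      have hcomp : (monomial β e • fun j : Fin n =>
            ∑ i, monomial (Finsupp.single i 1) (c lam i j)) j
          = ∑ i, monomial (β + Finsupp.single i 1) (e * c lam i j) := by
        rw [Pi.smul_apply, smul_eq_mul, Finset.mul_sum]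
        exact Finset.sum_congr rfl fun i _ => by rw [monomial_mul]
      rw [hcomp, hΦjsum]
      exact Finset.sum_congr rfl fun i _ => hΦjmon j _ _
    rw [hΦval]
    have hdegadd : ∀ i : Fin n, (∑ i', (β + Finsupp.single i 1 : Fin n →₀ ℕ) i') = (∑ i', β i') + 1 := by
      intro i
      simp only [Finsupp.add_apply]
      rw [Finset.sum_add_distrib]
      congr 1
      rw [Finset.sum_eq_single i]
      · simp
      · intro i' _ hi'
        exact Finsupp.single_eq_of_ne hi'
      · simp
    by_cases hβ : (∑ i', β i') = N
    · -- main case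
      obtain ⟨g₀, hg₀⟩ := aux_exists_rep β hβ
      obtain ⟨A, hAmem, hA⟩ := hsub (fun t => b (g₀ t))
      have hwval : ∀ i j, w j (β + Finsupp.single i 1) = b.repr (A (b i)) j := by
        intro i j
        have hdeg : (∑ i', (β + Finsupp.single i 1 : Fin n →₀ ℕ) i') = N + 1 := by rw [hdegadd, hβ]
        have h1 : w j (β + Finsupp.single i 1) = b.repr (u (fun t =>
            b ((Classical.choose (aux_exists_rep _ hdeg)) t))) j := dif_pos hdeg
        rw [h1]
        have hcnt := Classical.choose_spec (aux_exists_rep _ hdeg)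
        have hcnt2 : ∀ k, Fintype.card
            {t // (Fin.snoc g₀ i : Fin (N+1) → Fin n) t = k}
              = (β + Finsupp.single i 1 : Fin n →₀ ℕ) k := by
          intro k
          rw [aux_cnt_snoc, hg₀]
          simp [Finsupp.single_apply]
        have hWW := W (Classical.choose (aux_exists_rep _ hdeg)) (Fin.snoc g₀ i)
          (fun k => by rw [hcnt k, hcnt2 k])
        rw [hWW]
        have hsnoc : (fun t => b ((Fin.snoc g₀ i : Fin (N+1) → Fin n) t))
            = Fin.snoc (fun t => b (g₀ t)) (b i) := by
          funext t
          refine Fin.lastCases ?_ (fun k => ?_) t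
          · simp [Fin.snoc_last]
          · simp [Fin.snoc_castSucc]
        rw [hsnoc, hA (b i)]
      have hlamA : lam.1 A = 0 := lam.2 A hAmem
      have hAexp : lam.1 A = ∑ i, ∑ j, b.repr (A (b i)) j * c lam i j := by
        conv_lhs => rw [hexpand A]
        rw [map_sum]
        refine Finset.sum_congr rfl fun i _ => ?_
        rw [map_sum]
        refine Finset.sum_congr rfl fun j _ => ?_
        rw [map_smul, smul_eq_mul, hc]
      calc ∑ j, ∑ i, (e * c lam i j) * w j (β + Finsupp.single i 1)
          = e * ∑ j, ∑ i, b.repr (A (b i)) j * c lam i j := by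
            rw [Finset.mul_sum]
            refine Finset.sum_congr rfl fun j _ => ?_
            rw [Finset.mul_sum]
            refine Finset.sum_congr rfl fun i _ => ?_
            rw [hwval i j]
            ring
        _ = e * ∑ i, ∑ j, b.repr (A (b i)) j * c lam i j := by rw [Finset.sum_comm]
        _ = e * lam.1 A := by rw [hAexp]
        _ = 0 := by rw [hlamA, mul_zero]
    · -- degrees don't match, everything vanishes
      have : ∀ i j, w j (β + Finsupp.single i 1) = 0 := by
        intro i j
        apply dif_neg
        rw [hdegadd]
        omega
      simp [this]
  -- Φ vanishes on the span
  have hvanish : ∀ G ∈ Submodule.span (MvPolynomial (Fin n) ℂ)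
      (Set.range fun l : ι => fun j : Fin n =>
        ∑ i, monomial (Finsupp.single i 1) (c l i j)), Φ G = 0 := by
    intro G hG
    have main : ∀ s : MvPolynomial (Fin n) ℂ, Φ (s • G) = 0 := by
      refine Submodule.span_induction (p := fun G _ => ∀ s : MvPolynomial (Fin n) ℂ, Φ (s • G) = 0)
        ?_ ?_ ?_ ?_ hG
      · rintro x ⟨lam, rfl⟩ s
        induction s using MvPolynomial.induction_on' with
        | monomial β e => exact hkey lam β e
        | add p q hp hq => rw [add_smul, hΦadd, hp, hq, add_zero]
      · intro s
        rw [smul_zero, hΦ0]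
      · intro x y _ _ hx hy s
        rw [smul_add, hΦadd, hx, hy, add_zero]
      · intro a x _ hx s
        rw [smul_smul]
        exact hx (s * a)
    have := main 1
    rwa [one_smul] at this
  -- conclusion
  apply Module.Basis.ext_multilinear (fun _ => b)
  intro f
  set α : Fin n →₀ ℕ := Finsupp.equivFunOnFinite.symm
    (fun k => Fintype.card {t // f t = k}) with hα
  have hαapp : ∀ k, α k = Fintype.card {t // f t = k} := fun k => rfl
  have hαdeg : (∑ i, α i) = N + 1 := by
    have h1 : Fintype.card (Σ k : Fin n, {t // f t = k}) = Fintype.card (Fin (N + 1)) :=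
      Fintype.card_congr (Equiv.sigmaFiberEquiv f)
    rw [Fintype.card_sigma, Fintype.card_fin] at h1
    rw [← h1]
    exact Finset.sum_congr rfl fun k _ => hαapp k
  obtain ⟨i, hi⟩ : ∃ i, d ≤ α i := by
    by_contra hcon
    push_neg at hcon
    have hle : ∀ i, α i ≤ d - 1 := fun i => Nat.le_pred_of_lt (hcon i)
    have h2 : (∑ i, α i) ≤ ∑ _i : Fin n, (d - 1) := Finset.sum_le_sum fun i _ => hle i
    rw [Finset.sum_const, Finset.card_univ, Fintype.card_fin, smul_eq_mul, hαdeg] at h2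
    have h3 : n * (d - 1) ≤ n * d := Nat.mul_le_mul_left n (Nat.pred_le d)
    omega
  have hcoord : ∀ j, b.repr (u (fun t => b (f t))) j = 0 := by
    intro j
    have hsingle : Finsupp.single i d ≤ α := Finsupp.single_le_iff.mpr hi
    have hmono : (monomial α 1 : MvPolynomial (Fin n) ℂ)
        = monomial (α - Finsupp.single i d) 1 * X i ^ d := by
      rw [X_pow_eq_monomial, monomial_mul, mul_one, tsub_add_cancel_of_le hsingle]
    have hmem : (monomial α (1:ℂ) • (Pi.single j 1 : Fin n → MvPolynomial (Fin n) ℂ)) ∈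
        Submodule.span (MvPolynomial (Fin n) ℂ)
          (Set.range fun l : ι => fun j : Fin n =>
            ∑ i, monomial (Finsupp.single i 1) (c l i j)) := by
      rw [hmono, mul_smul]
      exact Submodule.smul_mem _ _ (hXd i j)
    have h0 := hvanish _ hmem
    have hΦval : Φ (monomial α (1:ℂ) • (Pi.single j 1 : Fin n → MvPolynomial (Fin n) ℂ))
        = w j α := by
      simp only [hΦ]
      rw [Finset.sum_eq_single j]
      · rw [Pi.smul_apply, Pi.single_eq_same, smul_eq_mul, mul_one, hΦjmon, one_mul]
      · intro j' _ hj'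
        rw [Pi.smul_apply, Pi.single_eq_of_ne hj', smul_zero, hΦj0]
      · simp
    have hwα : w j α = b.repr (u (fun t => b (f t))) j := by
      have h1 : w j α = b.repr (u (fun t =>
          b ((Classical.choose (aux_exists_rep α hαdeg)) t))) j := dif_pos hαdeg
      rw [h1]
      congr 2
      apply W
      intro k
      rw [Classical.choose_spec (aux_exists_rep α hαdeg) k, hαapp k]
    rw [hΦval, hwα] at h0
    exact h0
  have hzero : b.repr (u fun t => b (f t)) = 0 := Finsupp.ext hcoord
  have : u (fun t => b (f t)) = 0 := by
    have := congrArg b.repr.symm hzero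
    rwa [LinearEquiv.symm_apply_apply, map_zero] at this
  rw [this]
  simp

end
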